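/- In the onion graph G = On(k,l,m), let v be the cycle vertex with k pendant vertices and u_l the last vertex of the path (carrying m pendant vertices). Then t_G(v) = k + 1 + C(l+2,2) + m(l+2) and t_G(u_l) = m + C(l+2,2) + l + k(l+2). -/

import Mathlib

/-- The Wiener index of a graph: the sum of distances over all unordered pairs of vertices. -/
noncomputable def wienerIndex {V : Type*} [Fintype V] (G : SimpleGraph V) : ℕ :=
  (∑ u : V, ∑ v : V, G.dist u v) / 2

/-- The transmission of a vertex: the sum of distances from it to all other vertices. -/
noncomputable def transmission {V : Type*} [Fintype V] (G : SimpleGraph V) (x : V) : ℕ :=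
  ∑ u : V, G.dist x u

/-- The onion graph `On(k,l,m)`: a 4-cycle with antipodal vertices `u, v`,
`k` pendant edges attached at `v`, a path on `l` vertices one of whose endpoints
is identified with `u`, and `m` pendant edges attached to the other endpoint of
the path.  Vertices: `Sum.inl 0 = v`, `Sum.inl 1, Sum.inl 2` the two other cycle
vertices, `Sum.inr (Sum.inl i)` the path vertices (with `u` the path vertex `0`
and `u_l` the path vertex `l-1`), `Sum.inr (Sum.inr (Sum.inl _))` the `k`
pendants at `v`, and `Sum.inr (Sum.inr (Sum.inr _))` the `m` pendants at `u_l`. -/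
def onionGraph (k l m : ℕ) : SimpleGraph (Fin 3 ⊕ Fin l ⊕ Fin k ⊕ Fin m) :=
  SimpleGraph.fromRel (fun a b =>
    match a, b with
    | Sum.inl i, Sum.inl j => i = 0 ∧ j ≠ 0
    | Sum.inl i, Sum.inr (Sum.inl p) => i ≠ 0 ∧ (p : ℕ) = 0
    | Sum.inl i, Sum.inr (Sum.inr (Sum.inl _)) => i = 0
    | Sum.inr (Sum.inl p), Sum.inr (Sum.inl q) => (p : ℕ) + 1 = (q : ℕ)
    | Sum.inr (Sum.inl p), Sum.inr (Sum.inr (Sum.inr _)) => (p : ℕ) = l - 1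
    | _, _ => False)

/-! ### Auxiliary machinery -/

/-- If `d` is `0` at the base vertex, is 1-Lipschitz along edges, and every vertex has a
walk from the base of length `d x`, then `d` computes the graph distance from the base. -/
lemma dist_eq_of {V : Type*} (G : SimpleGraph V) (b : V) (d : V → ℕ)
    (h0 : d b = 0)
    (hlip : ∀ x y, G.Adj x y → d x ≤ d y + 1)
    (hwalk : ∀ x, ∃ W : G.Walk b x, W.length = d x) (x : V) :
    G.dist b x = d x := by
  obtain ⟨W, hW⟩ := hwalk x
  have hub : G.dist b x ≤ d x := hW ▸ SimpleGraph.dist_le W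
  have hr : G.Reachable b x := ⟨W⟩
  obtain ⟨W', hW'⟩ := hr.exists_walk_length_eq_dist
  have key : ∀ (y : V) (P : G.Walk y b), d y ≤ P.length := by
    intro y P
    clear hW hub hW' W W' hwalk hr x
    induction P with
    | nil => simp [h0]
    | cons h P ih =>
      have h3 := ih h0
      have := hlip _ _ h
      simp only [SimpleGraph.Walk.length_cons]
      omega
  have h2 := key x W'.reverse
  rw [SimpleGraph.Walk.length_reverse] at h2
  omega

lemma adj_v1 (k l m : ℕ) : (onionGraph k l m).Adj (Sum.inl 0) (Sum.inl 1) := by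
  simp [onionGraph, SimpleGraph.fromRel_adj]

lemma adj_1u (k l m : ℕ) (h : 0 < l) :
    (onionGraph k l m).Adj (Sum.inl 1) (Sum.inr (Sum.inl ⟨0, h⟩)) := by
  simp [onionGraph, SimpleGraph.fromRel_adj]

lemma adj_vk (k l m : ℕ) (a : Fin k) :
    (onionGraph k l m).Adj (Sum.inl 0) (Sum.inr (Sum.inr (Sum.inl a))) := by
  simp [onionGraph, SimpleGraph.fromRel_adj]

lemma adj_path (k l m : ℕ) (i : ℕ) (h : i + 1 < l) :
    (onionGraph k l m).Adj (Sum.inr (Sum.inl ⟨i, by omega⟩)) (Sum.inr (Sum.inl ⟨i+1, h⟩)) := by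
  simp [onionGraph, SimpleGraph.fromRel_adj]

lemma adj_um (k l m : ℕ) (h : 0 < l) (b : Fin m) :
    (onionGraph k l m).Adj (Sum.inr (Sum.inl ⟨l-1, by omega⟩)) (Sum.inr (Sum.inr (Sum.inr b))) := by
  simp [onionGraph, SimpleGraph.fromRel_adj]

/-- Walks along the path part of the onion graph. -/
lemma pathWalk (k l m : ℕ) : ∀ (q : ℕ) (hq : q < l) (p : ℕ) (hpq : p ≤ q),
    ∃ W : (onionGraph k l m).Walk (Sum.inr (Sum.inl ⟨p, by omega⟩)) (Sum.inr (Sum.inl ⟨q, hq⟩)),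
      W.length = q - p := by
  intro q
  induction q with
  | zero =>
    intro hq p hpq
    interval_cases p
    exact ⟨.nil, rfl⟩
  | succ q ih =>
    intro hq p hpq
    rcases Nat.eq_or_lt_of_le hpq with h | h
    · subst h
      exact ⟨.nil, by simp⟩
    · obtain ⟨W, hW⟩ := ih (by omega) p (by omega)
      exact ⟨W.concat (adj_path k l m q hq), by simp [hW]; omega⟩

/-- Walk from `v` to the path vertex `q`. -/
lemma vWalk (k l m : ℕ) (q : ℕ) (hq : q < l) :
    ∃ W : (onionGraph k l m).Walk (Sum.inl 0) (Sum.inr (Sum.inl ⟨q, hq⟩)),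
      W.length = q + 2 := by
  obtain ⟨W, hW⟩ := pathWalk k l m q hq 0 (by omega)
  exact ⟨.cons (adj_v1 k l m) (.cons (adj_1u k l m (by omega)) W), by simp [hW]⟩

/-- Potential function: distance from `v`. -/
def dv (k l m : ℕ) : Fin 3 ⊕ Fin l ⊕ Fin k ⊕ Fin m → ℕ
  | Sum.inl i => if i = 0 then 0 else 1
  | Sum.inr (Sum.inl p) => (p : ℕ) + 2
  | Sum.inr (Sum.inr (Sum.inl _)) => 1
  | Sum.inr (Sum.inr (Sum.inr _)) => l + 2

/-- Potential function: distance from `u_l`. -/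
def du (k l m : ℕ) : Fin 3 ⊕ Fin l ⊕ Fin k ⊕ Fin m → ℕ
  | Sum.inl i => if i = 0 then l + 1 else l
  | Sum.inr (Sum.inl p) => l - 1 - (p : ℕ)
  | Sum.inr (Sum.inr (Sum.inl _)) => l + 2
  | Sum.inr (Sum.inr (Sum.inr _)) => 1

lemma dv_lip (k l m : ℕ) :
    ∀ x y, (onionGraph k l m).Adj x y → dv k l m x ≤ dv k l m y + 1 := by
  intro x y hxy
  rw [onionGraph, SimpleGraph.fromRel_adj] at hxy
  obtain ⟨hne, h⟩ := hxy
  rcases x with i | p | a | b <;> rcases y with j | q | c | d <;>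
    simp only [ne_eq, Sum.inl.injEq, Sum.inr.injEq] at hne <;>
    simp only [] at h <;> simp only [dv] <;>
    first
    | (rcases h with ⟨h1,h2⟩|⟨h1,h2⟩ <;> simp_all <;> omega)
    | (rcases h with h|h <;> simp_all <;> omega)
    | simp_all
    | omega

lemma du_lip (k l m : ℕ) (hl : 1 ≤ l) :
    ∀ x y, (onionGraph k l m).Adj x y → du k l m x ≤ du k l m y + 1 := by
  intro x y hxy
  rw [onionGraph, SimpleGraph.fromRel_adj] at hxy
  obtain ⟨hne, h⟩ := hxy
  rcases x with i | p | a | b <;> rcases y with j | q | c | d <;>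
    simp only [ne_eq, Sum.inl.injEq, Sum.inr.injEq] at hne <;>
    simp only [] at h <;> simp only [du] <;>
    first
    | (have hp := Fin.isLt p; have hq := Fin.isLt q;
       rcases h with h|h <;> simp_all <;> omega)
    | (rcases h with ⟨h1,h2⟩|⟨h1,h2⟩ <;> simp_all <;> omega)
    | (rcases h with h|h <;> simp_all <;> omega)
    | simp_all
    | omega

lemma dv_walk (k l m : ℕ) (hl : 1 ≤ l) :
    ∀ x, ∃ W : (onionGraph k l m).Walk (Sum.inl 0) x, W.length = dv k l m x := by
  intro x
  rcases x with j | q | a | b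
  · fin_cases j
    · exact ⟨.nil, by simp [dv]⟩
    · exact ⟨.cons (adj_v1 k l m) .nil, by simp [dv]⟩
    · have hadj : (onionGraph k l m).Adj (Sum.inl 0) (Sum.inl 2) := by
        simp [onionGraph, SimpleGraph.fromRel_adj]
      exact ⟨.cons hadj .nil, by simp [dv]⟩
  · obtain ⟨W, hW⟩ := vWalk k l m q.1 q.2
    exact ⟨W, by simp [dv, hW]⟩
  · exact ⟨.cons (adj_vk k l m a) .nil, by simp [dv]⟩
  · obtain ⟨W, hW⟩ := vWalk k l m (l-1) (by omega)
    exact ⟨W.concat (adj_um k l m (by omega) b), by simp [dv, hW]; omega⟩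

lemma du_walk (k l m : ℕ) (hl : 1 ≤ l) :
    ∀ x, ∃ W : (onionGraph k l m).Walk (Sum.inr (Sum.inl ⟨l - 1, Nat.sub_lt hl Nat.one_pos⟩)) x,
      W.length = du k l m x := by
  have h0l : (0 : ℕ) < l := hl
  -- walk from path 0 to path (l-1)
  obtain ⟨W0, hW0⟩ := pathWalk k l m (l-1) (by omega) 0 (by omega)
  intro x
  rcases x with j | q | a | b
  · fin_cases j
    · -- v : via inl 1
      refine ⟨(SimpleGraph.Walk.cons (adj_v1 k l m)
        (.cons (adj_1u k l m h0l) W0)).reverse, ?_⟩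
      simp [du, hW0]; omega
    · refine ⟨(SimpleGraph.Walk.cons (adj_1u k l m h0l) W0).reverse, ?_⟩
      simp [du, hW0]; omega
    · have hadj : (onionGraph k l m).Adj (Sum.inl 2) (Sum.inr (Sum.inl ⟨0, h0l⟩)) := by
        simp [onionGraph, SimpleGraph.fromRel_adj]
      refine ⟨(SimpleGraph.Walk.cons hadj W0).reverse, ?_⟩
      simp [du, hW0]; omega
  · obtain ⟨W, hW⟩ := pathWalk k l m (l-1) (by omega) q.1 (by omega)
    exact ⟨W.reverse, by simp [du, hW]⟩
  · refine ⟨(SimpleGraph.Walk.cons ((adj_vk k l m a).symm)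
      (.cons (adj_v1 k l m) (.cons (adj_1u k l m h0l) W0))).reverse, ?_⟩
    simp [du, hW0]; omega
  · exact ⟨.cons (adj_um k l m h0l b) .nil, by simp [du]⟩

lemma sum_aux1 (l : ℕ) : (∑ i ∈ Finset.range l, (i + 2)) + 1 = (l + 2).choose 2 := by
  induction l with
  | zero => rfl
  | succ n ih =>
    rw [Finset.sum_range_succ]
    have : (n + 1 + 2).choose 2 = (n + 2).choose 2 + (n + 2) := by
      show (n + 3).choose 2 = _
      simp [Nat.choose_succ_succ, Nat.choose_one_right]
      omega
    omega

lemma sum_aux2 (l : ℕ) : (∑ i ∈ Finset.range l, (l - 1 - i)) = l.choose 2 := by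
  have h1 := Finset.sum_range_reflect (fun i => i) l
  have h2 := Finset.sum_range_id_mul_two l
  have h3 := Nat.choose_two_right l
  omega

lemma choose_aux (l : ℕ) : (l + 2).choose 2 = l.choose 2 + 2 * l + 1 := by
  simp [Nat.choose_succ_succ, Nat.choose_one_right]
  omega

/-- transmissions of `v` and of `u_l` in the onion graph. -/
theorem transmission_onion (k l m : ℕ) (hl : 1 ≤ l) :
    transmission (onionGraph k l m) (Sum.inl 0) =
      k + 1 + Nat.choose (l + 2) 2 + m * (l + 2) ∧
    transmission (onionGraph k l m) (Sum.inr (Sum.inl ⟨l - 1, by omega⟩)) =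
      m + Nat.choose (l + 2) 2 + l + k * (l + 2) := by
  have hdv : ∀ x, (onionGraph k l m).dist (Sum.inl 0) x = dv k l m x :=
    dist_eq_of _ _ _ (by simp [dv]) (dv_lip k l m) (dv_walk k l m hl)
  have hdu : ∀ x, (onionGraph k l m).dist (Sum.inr (Sum.inl ⟨l - 1, by omega⟩)) x
      = du k l m x :=
    dist_eq_of _ _ _ (by simp [du]) (du_lip k l m hl) (du_walk k l m hl)
  constructor
  · unfold transmission
    simp only [hdv]
    rw [Fintype.sum_sum_type, Fintype.sum_sum_type, Fintype.sum_sum_type]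
    simp only [dv]
    rw [Fin.sum_univ_three]
    simp only [Finset.sum_const, Finset.card_univ, Fintype.card_fin, smul_eq_mul,
      Fin.sum_univ_eq_sum_range]
    simp only [if_true, (by decide : ((1:Fin 3) = 0) = False),
      (by decide : ((2:Fin 3) = 0) = False), if_false]
    rw [Fin.sum_univ_eq_sum_range (fun i => (i + 2)) l]
    have h1 := sum_aux1 l
    omega
  · unfold transmission
    simp only [hdu]
    rw [Fintype.sum_sum_type, Fintype.sum_sum_type, Fintype.sum_sum_type]
    simp only [du]
    rw [Fin.sum_univ_three]
    simp only [Finset.sum_const, Finset.card_univ, Fintype.card_fin, smul_eq_mul,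
      Fin.sum_univ_eq_sum_range]
    simp only [if_true, (by decide : ((1:Fin 3) = 0) = False),
      (by decide : ((2:Fin 3) = 0) = False), if_false]
    have h2 := sum_aux2 l
    have h3 := choose_aux l
    omega
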